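/- Let d_A, d_B ≥ 1 and let ψ : Fin d_A × Fin d_B → ℂ be a normalized bipartite state. Let H be a group and u : H →* unitaryGroup (Fin d_A) ℂ, v : H →* unitaryGroup (Fin d_B) ℂ be group homomorphisms such that the action of u is irreducible, i.e. the only ℂ-submodules W of (Fin d_A → ℂ) with (u h).mulVecLin '' W ⊆ W for all h ∈ H are ⊥ and ⊤. Suppose that for every h ∈ H there exists c ∈ ℂ with ‖c‖ = 1 such that ∑_{a',b'} (u h) a a' · (v h) b b' · ψ(a',b') = c · ψ(a,b) for all (a,b). Then the reduced density matrix ρ_A(ψ), with entries ρ_A(ψ) a a' = ∑_b ψ(a,b) * conj (ψ(a',b)), equals (1/d_A) • 1. -/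

import Mathlib

open scoped ComplexConjugate
open scoped Matrix

noncomputable section

def rhoA {d₁ d₂ : ℕ} (ψ : Fin d₁ × Fin d₂ → ℂ) : Matrix (Fin d₁) (Fin d₁) ℂ :=
  Matrix.of fun a a' => ∑ b, ψ (a, b) * conj (ψ (a', b))

def rhoB {d₁ d₂ : ℕ} (ψ : Fin d₁ × Fin d₂ → ℂ) : Matrix (Fin d₂) (Fin d₂) ℂ :=
  Matrix.of fun b b' => ∑ a, ψ (a, b) * conj (ψ (a, b'))

def BiNormalized {d₁ d₂ : ℕ} (ψ : Fin d₁ × Fin d₂ → ℂ) : Prop :=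
  ∑ x, ‖ψ x‖ ^ 2 = 1

def BiIsLME {d₁ d₂ : ℕ} (ψ : Fin d₁ × Fin d₂ → ℂ) : Prop :=
  BiNormalized ψ ∧ rhoA ψ = (1 / (d₁ : ℂ)) • 1 ∧ rhoB ψ = (1 / (d₂ : ℂ)) • 1

def BiLMEExists (d₁ d₂ : ℕ) : Prop := ∃ ψ : Fin d₁ × Fin d₂ → ℂ, BiIsLME ψ

/-- A unitary representation is irreducible if the only invariant subspaces are
trivial. -/
def IsIrreducibleRep {m : ℕ} {H : Type*} [Group H]
    (u : H →* Matrix.unitaryGroup (Fin m) ℂ) : Prop :=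
  ∀ W : Submodule ℂ (Fin m → ℂ),
    (∀ h : H, ∀ w ∈ W, Matrix.mulVec (u h : Matrix (Fin m) (Fin m) ℂ) w ∈ W) →
    W = ⊥ ∨ W = ⊤

/-- if a normalized bipartite state is invariant up to a phase
under a product representation acting irreducibly on the first factor, then
the first reduced density matrix is maximally mixed. -/
theorem rep_invariant_maximally_mixed (dA dB : ℕ) (hA : 1 ≤ dA) (hB : 1 ≤ dB)
    (ψ : Fin dA × Fin dB → ℂ) (hψ : BiNormalized ψ)
    (H : Type*) [Group H]
    (u : H →* Matrix.unitaryGroup (Fin dA) ℂ)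
    (v : H →* Matrix.unitaryGroup (Fin dB) ℂ)
    (hirr : IsIrreducibleRep u)
    (hinv : ∀ h : H, ∃ c : ℂ, ‖c‖ = 1 ∧ ∀ a b,
      ∑ a', ∑ b', (u h : Matrix (Fin dA) (Fin dA) ℂ) a a' *
          (v h : Matrix (Fin dB) (Fin dB) ℂ) b b' * ψ (a', b') = c * ψ (a, b)) :
    rhoA ψ = (1 / (dA : ℂ)) • 1 := by
  classical
  set Ψ : Matrix (Fin dA) (Fin dB) ℂ := Matrix.of (fun a b => ψ (a, b)) with hΨdef
  have hρ : rhoA ψ = Ψ * Ψᴴ := by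
    ext a a'
    simp [rhoA, Matrix.mul_apply, Matrix.conjTranspose_apply, Ψ]
  set ρ : Matrix (Fin dA) (Fin dA) ℂ := Ψ * Ψᴴ with hρdef
  -- ρ commutes with every u h
  have hcomm : ∀ h : H, (u h : Matrix (Fin dA) (Fin dA) ℂ) * ρ
      = ρ * (u h : Matrix (Fin dA) (Fin dA) ℂ) := by
    intro h
    obtain ⟨c, hc, heq⟩ := hinv h
    set U : Matrix (Fin dA) (Fin dA) ℂ := (u h : Matrix (Fin dA) (Fin dA) ℂ) with hU
    set V : Matrix (Fin dB) (Fin dB) ℂ := (v h : Matrix (Fin dB) (Fin dB) ℂ) with hV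
    have hmat : U * Ψ * Vᵀ = c • Ψ := by
      ext a b
      have h1 := heq a b
      simp only [Matrix.mul_apply, Matrix.transpose_apply, Matrix.smul_apply,
        smul_eq_mul, Matrix.of_apply, Ψ]
      rw [← h1]
      simp only [Finset.sum_mul]
      rw [Finset.sum_comm]
      exact Finset.sum_congr rfl fun x _ => Finset.sum_congr rfl fun y _ => by ring
    have hVstar : Vᴴ * V = 1 := by
      rw [← Matrix.star_eq_conjTranspose]
      exact Matrix.UnitaryGroup.star_mul_self (v h)
    have hVth : Vᵀᴴ = Vᴴᵀ := by
      ext i j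
      simp [Matrix.conjTranspose_apply, Matrix.transpose_apply]
    have hVV : Vᵀ * Vᵀᴴ = 1 := by
      rw [hVth, ← Matrix.transpose_mul, hVstar, Matrix.transpose_one]
    have hcc : c * star c = 1 := by
      rw [Complex.star_def, Complex.mul_conj]
      norm_cast
      rw [Complex.normSq_eq_norm_sq, hc]; norm_num
    have key : U * ρ * Uᴴ = ρ := by
      have h2 : (U * Ψ * Vᵀ) * (U * Ψ * Vᵀ)ᴴ = (c • Ψ) * (c • Ψ)ᴴ := by rw [hmat]
      have h3 : (U * Ψ * Vᵀ) * (U * Ψ * Vᵀ)ᴴ = U * ρ * Uᴴ := by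
        simp only [Matrix.conjTranspose_mul, hρdef, Matrix.mul_assoc]
        rw [← Matrix.mul_assoc Vᵀ, hVV, Matrix.one_mul]
      have h4 : (c • Ψ) * (c • Ψ)ᴴ = ρ := by
        rw [Matrix.conjTranspose_smul, Matrix.smul_mul, Matrix.mul_smul, smul_smul,
          hcc, one_smul, hρdef]
      rw [← h3, h2, h4]
    have hUU : Uᴴ * U = 1 := by
      rw [← Matrix.star_eq_conjTranspose]
      exact Matrix.UnitaryGroup.star_mul_self (u h)
    calc U * ρ = U * ρ * (Uᴴ * U) := by rw [hUU, Matrix.mul_one]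
      _ = (U * ρ * Uᴴ) * U := by simp only [Matrix.mul_assoc]
      _ = ρ * U := by rw [key]
  -- ρ is hermitian
  have hherm : ρ.IsHermitian := by
    rw [hρdef, Matrix.IsHermitian, Matrix.conjTranspose_mul, Matrix.conjTranspose_conjTranspose]
  -- pick an eigenvalue
  have : NeZero dA := ⟨by omega⟩
  obtain ⟨lam, w, hwne, hwvec⟩ : ∃ (lam : ℝ) (w : Fin dA → ℂ),
      w ≠ 0 ∧ ρ *ᵥ w = (lam : ℂ) • w := by
    refine ⟨hherm.eigenvalues ⟨0, hA⟩, hherm.eigenvectorBasis ⟨0, hA⟩, ?_, ?_⟩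
    · intro hcon
      exact hherm.eigenvectorBasis.orthonormal.ne_zero ⟨0, hA⟩
        (by ext a; exact congrFun hcon a)
    · ext a
      have h0 := congrFun (hherm.mulVec_eigenvectorBasis ⟨0, hA⟩) a
      simpa [Complex.real_smul] using h0
  -- the eigenspace is invariant
  set W : Submodule ℂ (Fin dA → ℂ) := LinearMap.ker (ρ - (lam : ℂ) • 1).mulVecLin with hW
  have hmemW : ∀ x : Fin dA → ℂ, x ∈ W ↔ ρ *ᵥ x = (lam : ℂ) • x := by
    intro x
    rw [hW, LinearMap.mem_ker, Matrix.mulVecLin_apply, Matrix.sub_mulVec,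
      Matrix.smul_mulVec, Matrix.one_mulVec, sub_eq_zero]
  have hWinv : ∀ h : H, ∀ x ∈ W, Matrix.mulVec (u h : Matrix (Fin dA) (Fin dA) ℂ) x ∈ W := by
    intro h x hx
    rw [hmemW] at hx ⊢
    rw [Matrix.mulVec_mulVec, ← hcomm h, ← Matrix.mulVec_mulVec, hx, Matrix.mulVec_smul]
  have hWtop : W = ⊤ := by
    rcases hirr W hWinv with hbot | htop
    · exfalso
      apply hwne
      have : w ∈ (⊥ : Submodule ℂ (Fin dA → ℂ)) := hbot ▸ ((hmemW w).2 hwvec)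
      simpa using this
    · exact htop
  -- hence ρ = lam • 1
  have hρeq : ρ = (lam : ℂ) • 1 := by
    ext a a'
    have hx : (Pi.single a' 1 : Fin dA → ℂ) ∈ W := hWtop ▸ Submodule.mem_top
    rw [hmemW] at hx
    have := congrFun hx a
    simp only [Matrix.mulVec_single_one, Matrix.col_apply, mul_one] at this
    rw [this]
    simp [Matrix.one_apply, Pi.single_apply]
  -- trace computation
  have htr : Matrix.trace ρ = 1 := by
    rw [← hρ]
    have : Matrix.trace (rhoA ψ) = ∑ a, ∑ b, ψ (a, b) * conj (ψ (a, b)) := by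
      simp [Matrix.trace, Matrix.diag, rhoA]
    rw [this]
    have h2 : ∀ a b, ψ (a, b) * conj (ψ (a, b)) = ((‖ψ (a, b)‖ ^ 2 : ℝ) : ℂ) := by
      intro a b
      rw [Complex.mul_conj]
      norm_cast
      rw [Complex.normSq_eq_norm_sq]
    simp only [h2]
    rw [BiNormalized, Fintype.sum_prod_type] at hψ
    push_cast
    exact_mod_cast congrArg (Complex.ofReal) hψ
  have htr2 : Matrix.trace ρ = (lam : ℂ) * dA := by
    rw [hρeq]
    simp [Matrix.trace_smul, Matrix.trace_one, mul_comm]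
  have hdA : (dA : ℂ) ≠ 0 := by
    exact_mod_cast Nat.cast_ne_zero.mpr (by omega)
  have hlamval : (lam : ℂ) = 1 / (dA : ℂ) := by
    field_simp
    rw [← htr2, htr]
  rw [hρ, hρeq, hlamval]
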